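/- arXiv:0907.3726 — 4 statements merged into one kernel-verified Lean document; each statement's English description precedes it below -/
import Mathlib

section
/- Let 0 < λ < 1 and let u₁, u₂, v : ℝⁿ → ℝ be nonnegative measurable functions satisfying v((1-λ)x + λy) ≥ u₁(x)^(1-λ) · u₂(y)^λ for all x, y ∈ ℝⁿ. Then ∫ v ≥ (∫ u₁)^(1-λ) · (∫ u₂)^λ. -/
open MeasureTheory Set

section PrekopaLeindlerAux

open ENNReal NNReal Pointwise

lemma my_am_gm {w₁ w₂ : ℝ} (h₁ : 0 < w₁) (h₂ : 0 < w₂) (hw : w₁ + w₂ = 1) (p q : ℝ≥0∞) :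
    p ^ w₁ * q ^ w₂ ≤ ENNReal.ofReal w₁ * p + ENNReal.ofReal w₂ * q := by
  rcases eq_or_ne p ⊤ with rfl | hp
  · have : ENNReal.ofReal w₁ * ⊤ = ⊤ := by
      simp [ENNReal.mul_top, ENNReal.ofReal_pos.2 h₁, (ENNReal.ofReal_pos.2 h₁).ne']
    simp [this]
  rcases eq_or_ne q ⊤ with rfl | hq
  · have : ENNReal.ofReal w₂ * ⊤ = ⊤ := by
      simp [ENNReal.mul_top, (ENNReal.ofReal_pos.2 h₂).ne']
    simp [this]
  lift p to ℝ≥0 using hp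
  lift q to ℝ≥0 using hq
  rw [← ENNReal.coe_rpow_of_nonneg _ h₁.le, ← ENNReal.coe_rpow_of_nonneg _ h₂.le,
    ENNReal.ofReal, ENNReal.ofReal, ← ENNReal.coe_mul, ← ENNReal.coe_mul, ← ENNReal.coe_mul,
    ← ENNReal.coe_add, ENNReal.coe_le_coe]
  have := NNReal.geom_mean_le_arith_mean2_weighted (w₁ := w₁.toNNReal) (w₂ := w₂.toNNReal)
    (p₁ := p) (p₂ := q) ?_
  · simpa [Real.coe_toNNReal _ h₁.le, Real.coe_toNNReal _ h₂.le] using this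
  · have : (w₁.toNNReal + w₂.toNNReal : ℝ) = 1 := by
      push_cast [Real.coe_toNNReal _ h₁.le, Real.coe_toNNReal _ h₂.le]; linarith
    exact_mod_cast this

lemma my_sup_min (a : ℝ≥0∞) : ⨆ (n : ℕ), min a n = a := by
  apply le_antisymm (iSup_le fun n => min_le_left _ _)
  rcases eq_or_ne a ⊤ with rfl | ha
  · calc (⊤:ℝ≥0∞) = ⨆ (n:ℕ), (n:ℝ≥0∞) := (ENNReal.iSup_natCast).symm
      _ ≤ _ := iSup_mono fun n => by simp
  · obtain ⟨n, hn⟩ := ENNReal.exists_nat_gt ha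
    exact le_trans (le_of_eq (min_eq_left hn.le).symm) (le_iSup (fun n : ℕ => min a (n:ℝ≥0∞)) n)

lemma my_bm_compact {K L : Set ℝ} (hK : IsCompact K) (hL : IsCompact L)
    (hK0 : K.Nonempty) (hL0 : L.Nonempty) : volume K + volume L ≤ volume (K + L) := by
  set a := sSup K with ha
  set b := sInf L with hb
  have haK : a ∈ K := hK.sSup_mem hK0
  have hbL : b ∈ L := hL.sInf_mem hL0
  set S := (fun x => x + b) '' K with hS
  set T := (fun y => a + y) '' L with hT
  have hSsub : S ⊆ K + L := by
    rintro - ⟨x, hx, rfl⟩; exact add_mem_add hx hbL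
  have hTsub : T ⊆ K + L := by
    rintro - ⟨y, hy, rfl⟩; exact add_mem_add haK hy
  have hSm : MeasurableSet S := ((Homeomorph.addRight b).isCompact_image.2 hK).measurableSet
  have hTm : MeasurableSet T := ((Homeomorph.addLeft a).isCompact_image.2 hL).measurableSet
  have hST : S ∩ T ⊆ {a + b} := by
    rintro z ⟨⟨x, hx, rfl⟩, ⟨y, hy, hyz⟩⟩
    simp only at hyz
    have h1 : x + b ≤ a + b := by
      have := hK.bddAbove
      exact add_le_add_left (le_csSup this hx) b
    have h2 : a + b ≤ x + b := by
      rw [← hyz]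
      exact add_le_add_right (csInf_le hL.bddBelow hy) a
    simp [le_antisymm h1 h2]
  have hvS : volume S = volume K := by simp [hS, image_add_right, measure_preimage_add_right]
  have hvT : volume T = volume L := by simp [hT, image_add_left, measure_preimage_add]
  have key : volume S + volume T = volume (S ∪ T) + volume (S ∩ T) :=
    (measure_union_add_inter' hSm T).symm
  have hST0 : volume (S ∩ T) = 0 :=
    measure_mono_null hST (by simp)
  calc volume K + volume L = volume (S ∪ T) := by rw [← hvS, ← hvT, key, hST0, add_zero]
    _ ≤ volume (K + L) := measure_mono (union_subset hSsub hTsub)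

lemma my_bm_meas {A B : Set ℝ} (hA : MeasurableSet A) (hB : MeasurableSet B)
    (hA0 : A.Nonempty) (hB0 : B.Nonempty) : volume A + volume B ≤ volume (A + B) := by
  have key : ∀ r < volume A, ∀ s < volume B, r + s ≤ volume (A + B) := by
    intro r hr s hs
    obtain ⟨K, hKA, hKc, hrK⟩ :=
      (MeasureTheory.Measure.InnerRegular.innerRegular (μ := (volume : Measure ℝ))) hA r hr
    obtain ⟨L, hLB, hLc, hsL⟩ :=
      (MeasureTheory.Measure.InnerRegular.innerRegular (μ := (volume : Measure ℝ))) hB s hs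
    have hKne : K.Nonempty := by
      rw [nonempty_iff_ne_empty]; rintro rfl; simp at hrK
    have hLne : L.Nonempty := by
      rw [nonempty_iff_ne_empty]; rintro rfl; simp at hsL
    calc r + s ≤ volume K + volume L := add_le_add hrK.le hsL.le
      _ ≤ volume (K + L) := my_bm_compact hKc hLc hKne hLne
      _ ≤ volume (A + B) := measure_mono (add_subset_add hKA hLB)
  rcases eq_or_ne (volume A) 0 with h0 | h0
  · obtain ⟨a, ha⟩ := hA0
    have : volume B ≤ volume (A + B) := by
      calc volume B = volume ((fun y => a + y) '' B) := by
            simp [image_add_left, measure_preimage_add]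
        _ ≤ volume (A + B) := measure_mono (by rintro - ⟨y, hy, rfl⟩; exact add_mem_add ha hy)
    simpa [h0] using this
  rcases eq_or_ne (volume B) 0 with h1 | h1
  · obtain ⟨b, hb⟩ := hB0
    have : volume A ≤ volume (A + B) := by
      calc volume A = volume ((fun x => x + b) '' A) := by
            simp [image_add_right, measure_preimage_add_right]
        _ ≤ volume (A + B) := measure_mono (by rintro - ⟨x, hx, rfl⟩; exact add_mem_add hx hb)
    simpa [h1] using this
  refine le_of_forall_lt fun c hc => ?_
  obtain ⟨r, hr, s, hs, hc'⟩ := ENNReal.exists_lt_add_of_lt_add hc h0 h1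
  exact lt_of_lt_of_le hc' (key r hr s hs)

lemma my_layer {f : ℝ → ℝ≥0∞} (hf : Measurable f) (hf1 : ∀ x, f x ≤ 1) :
    ∫⁻ x, f x = ∫⁻ t in Ioo (0:ℝ) 1, volume {a | ENNReal.ofReal t < f a} := by
  have hne : ∀ x, f x ≠ ⊤ := fun x => (lt_of_le_of_lt (hf1 x) one_lt_top).ne
  have h1 : ∫⁻ x, f x = ∫⁻ x, ENNReal.ofReal ((f x).toReal) :=
    lintegral_congr fun x => (ENNReal.ofReal_toReal (hne x)).symm
  rw [h1, lintegral_eq_lintegral_meas_lt volume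
    (Filter.Eventually.of_forall fun x => ENNReal.toReal_nonneg) hf.ennreal_toReal.aemeasurable]
  have hset : ∀ t ∈ Ioi (0:ℝ), volume {a | t < (f a).toReal}
      = volume {a | ENNReal.ofReal t < f a} := by
    intro t ht
    congr 1; ext a
    simp only [mem_setOf_eq]
    rw [ENNReal.ofReal_lt_iff_lt_toReal ht.le (hne a)]
  rw [setLIntegral_congr_fun measurableSet_Ioi hset]
  rw [← Ioo_union_Ici_eq_Ioi (zero_lt_one (α := ℝ)),
    lintegral_union measurableSet_Ici (by rw [Set.disjoint_left]; intro t ht ht2; exact absurd ht2.out (not_le.2 ht.2))]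
  have hzero : ∀ t ∈ Ici (1:ℝ), volume {a | ENNReal.ofReal t < f a} = (0:ℝ≥0∞) := by
    intro t ht
    convert measure_empty (μ := (volume : Measure ℝ))
    ext a; simp only [mem_setOf_eq, mem_empty_iff_false, iff_false, not_lt]
    exact le_trans (hf1 a) (ENNReal.one_le_ofReal.2 ht)
  rw [setLIntegral_congr_fun measurableSet_Ici hzero]
  simp

lemma my_one_dim_norm {lam : ℝ} (hlam₀ : 0 < lam) (hlam₁ : lam < 1) (f g h : ℝ → ℝ≥0∞)
    (hf : Measurable f) (hg : Measurable g) (hh : Measurable h)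
    (hfs : ⨆ x, f x = 1) (hgs : ⨆ x, g x = 1)
    (hyp : ∀ x y : ℝ, f x ^ (1 - lam) * g y ^ lam ≤ h ((1 - lam) • x + lam • y)) :
    ENNReal.ofReal (1 - lam) * (∫⁻ x, f x) + ENNReal.ofReal lam * (∫⁻ y, g y) ≤ ∫⁻ z, h z := by
  have hf1 : ∀ x, f x ≤ 1 := fun x => hfs ▸ le_iSup f x
  have hg1 : ∀ x, g x ≤ 1 := fun x => hgs ▸ le_iSup g x
  set h' : ℝ → ℝ≥0∞ := fun z => min (h z) 1 with hh'def
  have hh' : Measurable h' := hh.min measurable_const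
  have hh'1 : ∀ x, h' x ≤ 1 := fun x => min_le_right _ _
  -- pointwise superlevel-set inequality
  have key : ∀ t ∈ Ioo (0:ℝ) 1,
      ENNReal.ofReal (1 - lam) * volume {a | ENNReal.ofReal t < f a}
        + ENNReal.ofReal lam * volume {a | ENNReal.ofReal t < g a}
      ≤ volume {a | ENNReal.ofReal t < h' a} := by
    intro t ht
    have ht0 : (ENNReal.ofReal t) ≠ 0 := (ENNReal.ofReal_pos.2 ht.1).ne'
    have ht1 : ENNReal.ofReal t < 1 := ENNReal.ofReal_lt_one.2 ht.2
    set A := {a | ENNReal.ofReal t < f a} with hA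
    set B := {a | ENNReal.ofReal t < g a} with hB
    have hAm : MeasurableSet A := hf measurableSet_Ioi
    have hBm : MeasurableSet B := hg measurableSet_Ioi
    have hAne : A.Nonempty := by
      rw [← hfs] at ht1
      obtain ⟨x, hx⟩ := lt_iSup_iff.1 ht1
      exact ⟨x, hx⟩
    have hBne : B.Nonempty := by
      rw [← hgs] at ht1
      obtain ⟨y, hy⟩ := lt_iSup_iff.1 ht1
      exact ⟨y, hy⟩
    have hincl : (1 - lam) • A + lam • B ⊆ {a | ENNReal.ofReal t < h' a} := by
      rintro - ⟨-, ⟨x, hx, rfl⟩, -, ⟨y, hy, rfl⟩, rfl⟩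
      have hx' : ENNReal.ofReal t < f x := hx
      have hy' : ENNReal.ofReal t < g y := hy
      have hstep : ENNReal.ofReal t < f x ^ (1 - lam) * g y ^ lam := by
        calc ENNReal.ofReal t = (ENNReal.ofReal t) ^ (1 - lam) * (ENNReal.ofReal t) ^ lam := by
              rw [← ENNReal.rpow_add _ _ ht0 ENNReal.ofReal_ne_top]
              norm_num
          _ < f x ^ (1 - lam) * (ENNReal.ofReal t) ^ lam := by
              refine ENNReal.mul_lt_mul_left ?_ ?_
                (ENNReal.rpow_lt_rpow hx' (by linarith))
              · exact (ENNReal.rpow_pos (ENNReal.ofReal_pos.2 ht.1) ENNReal.ofReal_ne_top).ne'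
              · exact (ENNReal.rpow_lt_top_of_nonneg hlam₀.le ENNReal.ofReal_ne_top).ne
          _ ≤ f x ^ (1 - lam) * g y ^ lam :=
              mul_le_mul_right (ENNReal.rpow_le_rpow hy'.le hlam₀.le) _
      have hfin : ENNReal.ofReal t < h ((1 - lam) • x + lam • y) :=
        lt_of_lt_of_le hstep (hyp x y)
      exact lt_min hfin ht1
    calc ENNReal.ofReal (1 - lam) * volume A + ENNReal.ofReal lam * volume B
        = volume ((1 - lam) • A) + volume (lam • B) := by
          rw [Measure.addHaar_smul volume, Measure.addHaar_smul volume]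
          simp [abs_of_pos hlam₀, abs_of_pos (by linarith : (0:ℝ) < 1 - lam)]
      _ ≤ volume ((1 - lam) • A + lam • B) :=
          my_bm_meas (hAm.const_smul₀ _) (hBm.const_smul₀ _) hAne.smul_set hBne.smul_set
      _ ≤ volume {a | ENNReal.ofReal t < h' a} := measure_mono hincl
  -- measurability of the superlevel volume functions
  have measF : Measurable fun t : ℝ => volume {a | ENNReal.ofReal t < f a} := by
    apply Antitone.measurable
    intro t₁ t₂ h12
    exact measure_mono fun a ha => lt_of_le_of_lt (ENNReal.ofReal_le_ofReal h12) ha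
  have measG : Measurable fun t : ℝ => volume {a | ENNReal.ofReal t < g a} := by
    apply Antitone.measurable
    intro t₁ t₂ h12
    exact measure_mono fun a ha => lt_of_le_of_lt (ENNReal.ofReal_le_ofReal h12) ha
  calc ENNReal.ofReal (1 - lam) * (∫⁻ x, f x) + ENNReal.ofReal lam * (∫⁻ y, g y)
      = ∫⁻ t in Ioo (0:ℝ) 1, (ENNReal.ofReal (1 - lam) * volume {a | ENNReal.ofReal t < f a}
          + ENNReal.ofReal lam * volume {a | ENNReal.ofReal t < g a}) := by
        rw [my_layer hf hf1, my_layer hg hg1]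
        rw [lintegral_add_left (by fun_prop) _,
          lintegral_const_mul _ (by fun_prop), lintegral_const_mul _ (by fun_prop)]
    _ ≤ ∫⁻ t in Ioo (0:ℝ) 1, volume {a | ENNReal.ofReal t < h' a} :=
        setLIntegral_mono_ae' measurableSet_Ioo (ae_of_all _ key)
    _ = ∫⁻ z, h' z := (my_layer hh' hh'1).symm
    _ ≤ ∫⁻ z, h z := lintegral_mono fun z => min_le_left _ _

lemma my_sup_mul_sup {a b : ℕ → ℝ≥0∞} (ha : Monotone a) (hb : Monotone b) :
    (⨆ n, a n) * (⨆ n, b n) = ⨆ n, a n * b n := by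
  rw [ENNReal.iSup_mul]
  simp_rw [ENNReal.mul_iSup]
  refine le_antisymm
    (iSup₂_le fun n m => le_iSup_of_le (max n m)
      (mul_le_mul' (ha (le_max_left n m)) (hb (le_max_right n m))))
    (iSup_le fun n => le_iSup₂_of_le n n le_rfl)

lemma my_rpow_sup {a : ℕ → ℝ≥0∞} (ha : Monotone a) {p : ℝ} (hp : 0 < p) :
    (⨆ n, a n) ^ p = ⨆ n, a n ^ p := by
  refine le_antisymm ?_ (iSup_le fun n => ENNReal.rpow_le_rpow (le_iSup a n) hp.le)
  refine le_of_forall_lt fun c hc => ?_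
  have h1 : c ^ (1/p) < ⨆ n, a n := by
    have := ENNReal.rpow_lt_rpow hc (by positivity : (0:ℝ) < 1/p)
    rwa [← ENNReal.rpow_mul, mul_one_div, div_self hp.ne', ENNReal.rpow_one] at this
  obtain ⟨n, hn⟩ := lt_iSup_iff.1 h1
  have h2 : (c ^ (1/p)) ^ p < a n ^ p := ENNReal.rpow_lt_rpow hn hp
  rw [← ENNReal.rpow_mul, one_div_mul_cancel hp.ne', ENNReal.rpow_one] at h2
  exact lt_of_lt_of_le h2 (le_iSup (fun n => a n ^ p) n)

lemma my_one_dim_bdd {lam : ℝ} (hlam₀ : 0 < lam) (hlam₁ : lam < 1) (f g h : ℝ → ℝ≥0∞)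
    (hf : Measurable f) (hg : Measurable g) (hh : Measurable h)
    (hfb : ∃ C : ℝ≥0∞, C ≠ ⊤ ∧ ∀ x, f x ≤ C) (hgb : ∃ C : ℝ≥0∞, C ≠ ⊤ ∧ ∀ x, g x ≤ C)
    (hyp : ∀ x y : ℝ, f x ^ (1 - lam) * g y ^ lam ≤ h ((1 - lam) • x + lam • y)) :
    (∫⁻ x, f x) ^ (1 - lam) * (∫⁻ y, g y) ^ lam ≤ ∫⁻ z, h z := by
  have hw1 : (0:ℝ) < 1 - lam := by linarith
  set Mf := ⨆ x, f x with hMf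
  set Mg := ⨆ x, g x with hMg
  obtain ⟨Cf, hCf, hfC⟩ := hfb
  obtain ⟨Cg, hCg, hgC⟩ := hgb
  have hMft : Mf ≠ ⊤ := ((iSup_le hfC).trans_lt hCf.lt_top).ne
  have hMgt : Mg ≠ ⊤ := ((iSup_le hgC).trans_lt hCg.lt_top).ne
  rcases eq_or_ne Mf 0 with hMf0 | hMf0
  · have : ∫⁻ x, f x = 0 := by
      have : ∀ x, f x = 0 := fun x => le_antisymm (hMf0 ▸ le_iSup f x) (zero_le')
      simp [this]
    rw [this, ENNReal.zero_rpow_of_pos hw1, zero_mul]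
    exact zero_le'
  rcases eq_or_ne Mg 0 with hMg0 | hMg0
  · have : ∫⁻ y, g y = 0 := by
      have : ∀ x, g x = 0 := fun x => le_antisymm (hMg0 ▸ le_iSup g x) (zero_le')
      simp [this]
    rw [this, ENNReal.zero_rpow_of_pos hlam₀, mul_zero]
    exact zero_le'
  -- normalization
  set c : ℝ≥0∞ := Mf ^ (1 - lam) * Mg ^ lam with hc
  have hc0 : c ≠ 0 := by
    simp only [hc, mul_ne_zero_iff]
    exact ⟨(ENNReal.rpow_pos (hMf0.bot_lt) hMft).ne', (ENNReal.rpow_pos (hMg0.bot_lt) hMgt).ne'⟩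
  have hct : c ≠ ⊤ := by
    simp only [hc]
    exact ENNReal.mul_ne_top (ENNReal.rpow_ne_top_of_nonneg hw1.le hMft)
      (ENNReal.rpow_ne_top_of_nonneg hlam₀.le hMgt)
  set F : ℝ → ℝ≥0∞ := fun x => f x / Mf with hF
  set G : ℝ → ℝ≥0∞ := fun x => g x / Mg with hG
  set H : ℝ → ℝ≥0∞ := fun z => h z / c with hH
  have hFs : ⨆ x, F x = 1 := by
    rw [hF, ← ENNReal.iSup_div, ← hMf, ENNReal.div_self hMf0 hMft]
  have hGs : ⨆ x, G x = 1 := by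
    rw [hG, ← ENNReal.iSup_div, ← hMg, ENNReal.div_self hMg0 hMgt]
  have hyp' : ∀ x y : ℝ, F x ^ (1 - lam) * G y ^ lam ≤ H ((1 - lam) • x + lam • y) := by
    intro x y
    have e1 : F x ^ (1 - lam) * G y ^ lam = (f x ^ (1 - lam) * g y ^ lam) / c := by
      rw [hF, hG, hc, ENNReal.div_rpow_of_nonneg _ _ hw1.le,
        ENNReal.div_rpow_of_nonneg _ _ hlam₀.le]
      rw [div_eq_mul_inv, div_eq_mul_inv, div_eq_mul_inv, ENNReal.mul_inv
        (Or.inl (ENNReal.rpow_pos hMf0.bot_lt hMft).ne')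
        (Or.inl (ENNReal.rpow_ne_top_of_nonneg hw1.le hMft))]
      ring
    rw [e1]
    exact ENNReal.div_le_div_right (hyp x y) c
  have hnorm := my_one_dim_norm hlam₀ hlam₁ F G H (hf.div_const _) (hg.div_const _)
    (hh.div_const _) hFs hGs hyp'
  have hamgm : (∫⁻ x, F x) ^ (1 - lam) * (∫⁻ y, G y) ^ lam ≤ ∫⁻ z, H z :=
    le_trans (my_am_gm hw1 hlam₀ (by ring) _ _) hnorm
  -- translate back
  have hIF : ∫⁻ x, F x = (∫⁻ x, f x) / Mf := by
    simp only [hF, div_eq_mul_inv]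
    exact lintegral_mul_const' _ _ (by simp [hMf0])
  have hIG : ∫⁻ y, G y = (∫⁻ y, g y) / Mg := by
    simp only [hG, div_eq_mul_inv]
    exact lintegral_mul_const' _ _ (by simp [hMg0])
  have hIH : ∫⁻ z, H z = (∫⁻ z, h z) / c := by
    simp only [hH, div_eq_mul_inv]
    exact lintegral_mul_const' _ _ (by simp [hc0])
  rw [hIF, hIG, hIH] at hamgm
  have e2 : ((∫⁻ x, f x) / Mf) ^ (1 - lam) * ((∫⁻ y, g y) / Mg) ^ lam
      = ((∫⁻ x, f x) ^ (1 - lam) * (∫⁻ y, g y) ^ lam) / c := by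
    rw [hc, ENNReal.div_rpow_of_nonneg _ _ hw1.le, ENNReal.div_rpow_of_nonneg _ _ hlam₀.le]
    rw [div_eq_mul_inv, div_eq_mul_inv, div_eq_mul_inv, ENNReal.mul_inv
      (Or.inl (ENNReal.rpow_pos hMf0.bot_lt hMft).ne')
      (Or.inl (ENNReal.rpow_ne_top_of_nonneg hw1.le hMft))]
    ring
  rw [e2] at hamgm
  calc (∫⁻ x, f x) ^ (1 - lam) * (∫⁻ y, g y) ^ lam
      = ((∫⁻ x, f x) ^ (1 - lam) * (∫⁻ y, g y) ^ lam) / c * c :=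
        (ENNReal.div_mul_cancel hc0 hct).symm
    _ ≤ (∫⁻ z, h z) / c * c := mul_le_mul_left hamgm c
    _ = ∫⁻ z, h z := ENNReal.div_mul_cancel hc0 hct

lemma my_one_dim {lam : ℝ} (hlam₀ : 0 < lam) (hlam₁ : lam < 1) (f g h : ℝ → ℝ≥0∞)
    (hf : Measurable f) (hg : Measurable g) (hh : Measurable h)
    (hyp : ∀ x y : ℝ, f x ^ (1 - lam) * g y ^ lam ≤ h ((1 - lam) • x + lam • y)) :
    (∫⁻ x, f x) ^ (1 - lam) * (∫⁻ y, g y) ^ lam ≤ ∫⁻ z, h z := by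
  have hw1 : (0:ℝ) < 1 - lam := by linarith
  set fn : ℕ → ℝ → ℝ≥0∞ := fun n x => min (f x) n with hfn
  set gn : ℕ → ℝ → ℝ≥0∞ := fun n x => min (g x) n with hgn
  have hfnm : ∀ n, Measurable (fn n) := fun n => hf.min measurable_const
  have hgnm : ∀ n, Measurable (gn n) := fun n => hg.min measurable_const
  have hbdd : ∀ n, (∫⁻ x, fn n x) ^ (1 - lam) * (∫⁻ y, gn n y) ^ lam ≤ ∫⁻ z, h z := by
    intro n
    refine my_one_dim_bdd hlam₀ hlam₁ _ _ h (hfnm n) (hgnm n) hh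
      ⟨n, ENNReal.natCast_ne_top n, fun x => min_le_right _ _⟩
      ⟨n, ENNReal.natCast_ne_top n, fun x => min_le_right _ _⟩ fun x y => ?_
    calc fn n x ^ (1 - lam) * gn n y ^ lam
        ≤ f x ^ (1 - lam) * g y ^ lam :=
          mul_le_mul' (ENNReal.rpow_le_rpow (min_le_left _ _) hw1.le)
            (ENNReal.rpow_le_rpow (min_le_left _ _) hlam₀.le)
      _ ≤ h ((1 - lam) • x + lam • y) := hyp x y
  have hmono_f : Monotone fun n : ℕ => ∫⁻ x, fn n x := by
    intro n m hnm
    exact lintegral_mono fun x => min_le_min le_rfl (by exact_mod_cast Nat.cast_le.2 hnm)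
  have hmono_g : Monotone fun n : ℕ => ∫⁻ y, gn n y := by
    intro n m hnm
    exact lintegral_mono fun x => min_le_min le_rfl (by exact_mod_cast Nat.cast_le.2 hnm)
  have hsupf : (⨆ n, ∫⁻ x, fn n x) = ∫⁻ x, f x := by
    rw [← lintegral_iSup hfnm fun n m hnm x =>
      min_le_min le_rfl (by exact_mod_cast Nat.cast_le.2 hnm)]
    exact lintegral_congr fun x => my_sup_min (f x)
  have hsupg : (⨆ n, ∫⁻ y, gn n y) = ∫⁻ y, g y := by
    rw [← lintegral_iSup hgnm fun n m hnm x =>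
      min_le_min le_rfl (by exact_mod_cast Nat.cast_le.2 hnm)]
    exact lintegral_congr fun x => my_sup_min (g x)
  calc (∫⁻ x, f x) ^ (1 - lam) * (∫⁻ y, g y) ^ lam
      = (⨆ n, (∫⁻ x, fn n x) ^ (1 - lam)) * ⨆ n, (∫⁻ y, gn n y) ^ lam := by
        rw [← hsupf, ← hsupg, my_rpow_sup hmono_f hw1, my_rpow_sup hmono_g hlam₀]
    _ = ⨆ n, (∫⁻ x, fn n x) ^ (1 - lam) * (∫⁻ y, gn n y) ^ lam :=
        my_sup_mul_sup (fun n m hnm => ENNReal.rpow_le_rpow (hmono_f hnm) hw1.le)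
          (fun n m hnm => ENNReal.rpow_le_rpow (hmono_g hnm) hlam₀.le)
    _ ≤ ∫⁻ z, h z := iSup_le hbdd

lemma my_pl_pi {lam : ℝ} (hlam₀ : 0 < lam) (hlam₁ : lam < 1) :
    ∀ (n : ℕ) (f g h : (Fin n → ℝ) → ℝ≥0∞), Measurable f → Measurable g → Measurable h →
    (∀ x y, f x ^ (1 - lam) * g y ^ lam ≤ h ((1 - lam) • x + lam • y)) →
    (∫⁻ x, f x) ^ (1 - lam) * (∫⁻ y, g y) ^ lam ≤ ∫⁻ z, h z := by
  intro n
  induction n with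
  | zero =>
    intro f g h hf hg hh hyp
    have huniv : (volume : Measure (Fin 0 → ℝ)) univ = 1 := by
      rw [volume_pi, Measure.pi_univ]
      simp
    have hconst : ∀ (k : (Fin 0 → ℝ) → ℝ≥0∞) (x : Fin 0 → ℝ), ∫⁻ y, k y = k x := by
      intro k x
      rw [lintegral_unique k, huniv, mul_one]
      exact congrArg k (Subsingleton.elim _ _)
    set d : Fin 0 → ℝ := default with hd
    rw [hconst f d, hconst g d, hconst h ((1 - lam) • d + lam • d)]
    exact hyp d d
  | succ n ih =>
    intro f g h hf hg hh hyp
    set E := MeasurableEquiv.piFinSuccAbove (fun _ : Fin (n+1) => ℝ) 0 with hE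
    have P := volume_preserving_piFinSuccAbove (fun _ : Fin (n+1) => ℝ) 0
    have hlin : ∀ (a b : ℝ) (u v : Fin (n+1) → ℝ), E (a • u + b • v) = a • E u + b • E v := by
      intro a b u v
      refine Prod.ext ?_ ?_
      · simp [hE, MeasurableEquiv.piFinSuccAbove_apply]
      · funext j
        simp [hE, MeasurableEquiv.piFinSuccAbove_apply, Fin.tail]
    set f' : ℝ × (Fin n → ℝ) → ℝ≥0∞ := fun p => f (E.symm p) with hf'def
    set g' : ℝ × (Fin n → ℝ) → ℝ≥0∞ := fun p => g (E.symm p) with hg'def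
    set h' : ℝ × (Fin n → ℝ) → ℝ≥0∞ := fun p => h (E.symm p) with hh'def
    have hf' : Measurable f' := hf.comp E.symm.measurable
    have hg' : Measurable g' := hg.comp E.symm.measurable
    have hh' : Measurable h' := hh.comp E.symm.measurable
    have hyp' : ∀ p q : ℝ × (Fin n → ℝ),
        f' p ^ (1 - lam) * g' q ^ lam ≤ h' ((1 - lam) • p + lam • q) := by
      intro p q
      have h1 := hyp (E.symm p) (E.symm q)
      have h2 : E ((1 - lam) • E.symm p + lam • E.symm q) = (1 - lam) • p + lam • q := by
        rw [hlin]; simp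
      calc f' p ^ (1 - lam) * g' q ^ lam
          ≤ h ((1 - lam) • E.symm p + lam • E.symm q) := h1
        _ = h' ((1 - lam) • p + lam • q) := by
            rw [hh'def]; simp only [← h2, MeasurableEquiv.symm_apply_apply]
    have hIf : ∫⁻ x, f x = ∫⁻ p, f' p := by
      rw [← P.lintegral_comp hf']
      refine lintegral_congr fun x => ?_
      rw [hf'def]
      simp only [← hE, MeasurableEquiv.symm_apply_apply]
    have hIg : ∫⁻ y, g y = ∫⁻ p, g' p := by
      rw [← P.lintegral_comp hg']
      refine lintegral_congr fun x => ?_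
      rw [hg'def]
      simp only [← hE, MeasurableEquiv.symm_apply_apply]
    have hIh : ∫⁻ z, h z = ∫⁻ p, h' p := by
      rw [← P.lintegral_comp hh']
      refine lintegral_congr fun x => ?_
      rw [hh'def]
      simp only [← hE, MeasurableEquiv.symm_apply_apply]
    set F : ℝ → ℝ≥0∞ := fun t => ∫⁻ x, f' (t, x) with hF
    set G : ℝ → ℝ≥0∞ := fun t => ∫⁻ x, g' (t, x) with hG
    set H : ℝ → ℝ≥0∞ := fun t => ∫⁻ x, h' (t, x) with hH
    have hFm : Measurable F := hf'.lintegral_prod_right'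
    have hGm : Measurable G := hg'.lintegral_prod_right'
    have hHm : Measurable H := hh'.lintegral_prod_right'
    have hFGH : ∀ t s : ℝ, F t ^ (1 - lam) * G s ^ lam ≤ H ((1 - lam) • t + lam • s) := by
      intro t s
      refine ih (fun x => f' (t, x)) (fun y => g' (s, y))
        (fun z => h' ((1 - lam) • t + lam • s, z))
        (hf'.comp (measurable_prodMk_left)) (hg'.comp (measurable_prodMk_left))
        (hh'.comp (measurable_prodMk_left)) fun x y => ?_
      have hpt := hyp' (t, x) (s, y)
      have heq : ((1 - lam) • ((t, x) : ℝ × (Fin n → ℝ)) + lam • (s, y))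
          = ((1 - lam) • t + lam • s, (1 - lam) • x + lam • y) := rfl
      rwa [heq] at hpt
    have h1d := my_one_dim hlam₀ hlam₁ F G H hFm hGm hHm hFGH
    rw [hIf, hIg, hIh]
    have ef : ∫⁻ p, f' p = ∫⁻ t, F t := by
      rw [Measure.volume_eq_prod, lintegral_prod f' hf'.aemeasurable]
    have eg : ∫⁻ p, g' p = ∫⁻ t, G t := by
      rw [Measure.volume_eq_prod, lintegral_prod g' hg'.aemeasurable]
    have eh : ∫⁻ p, h' p = ∫⁻ t, H t := by
      rw [Measure.volume_eq_prod, lintegral_prod h' hh'.aemeasurable]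
    rw [ef, eg, eh]
    exact h1d

end PrekopaLeindlerAux

/-- **Prékopa–Leindler inequality** on `ℝⁿ` with Lebesgue measure:
if `0 < λ < 1` and `u₁, u₂, v` are nonnegative measurable functions with
`v ((1-λ) • x + λ • y) ≥ u₁ x ^ (1-λ) * u₂ y ^ λ` for all `x, y`, then
`∫ v ≥ (∫ u₁) ^ (1-λ) * (∫ u₂) ^ λ`. -/
theorem prekopa_leindler_euclidean {n : ℕ} {lam : ℝ} (hlam₀ : 0 < lam) (hlam₁ : lam < 1)
    (u₁ u₂ v : EuclideanSpace ℝ (Fin n) → ℝ)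
    (hu₁ : Measurable u₁) (hu₂ : Measurable u₂) (hv : Measurable v)
    (hu₁0 : ∀ x, 0 ≤ u₁ x) (hu₂0 : ∀ x, 0 ≤ u₂ x) (hv0 : ∀ x, 0 ≤ v x)
    (hyp : ∀ x y : EuclideanSpace ℝ (Fin n),
      u₁ x ^ (1 - lam) * u₂ y ^ lam ≤ v ((1 - lam) • x + lam • y)) :
    (∫⁻ x, ENNReal.ofReal (u₁ x)) ^ (1 - lam) * (∫⁻ y, ENNReal.ofReal (u₂ y)) ^ lam
      ≤ ∫⁻ z, ENNReal.ofReal (v z) := by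
  have hw1 : (0:ℝ) < 1 - lam := by linarith
  set e := (MeasurableEquiv.toLp 2 (Fin n → ℝ)).symm with he
  have P := EuclideanSpace.volume_preserving_symm_measurableEquiv_toLp (Fin n)
  set f : (Fin n → ℝ) → ENNReal := fun x => ENNReal.ofReal (u₁ (e.symm x)) with hfdef
  set g : (Fin n → ℝ) → ENNReal := fun x => ENNReal.ofReal (u₂ (e.symm x)) with hgdef
  set h : (Fin n → ℝ) → ENNReal := fun x => ENNReal.ofReal (v (e.symm x)) with hhdef
  have hf : Measurable f := (hu₁.comp e.symm.measurable).ennreal_ofReal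
  have hg : Measurable g := (hu₂.comp e.symm.measurable).ennreal_ofReal
  have hh : Measurable h := (hv.comp e.symm.measurable).ennreal_ofReal
  have hlin : ∀ x y : Fin n → ℝ,
      e.symm ((1 - lam) • x + lam • y) = (1 - lam) • e.symm x + lam • e.symm y := fun x y => rfl
  have hyp' : ∀ x y, f x ^ (1 - lam) * g y ^ lam ≤ h ((1 - lam) • x + lam • y) := by
    intro x y
    rw [hfdef, hgdef, hhdef]
    simp only []
    rw [ENNReal.ofReal_rpow_of_nonneg (hu₁0 _) hw1.le,
      ENNReal.ofReal_rpow_of_nonneg (hu₂0 _) hlam₀.le, ← ENNReal.ofReal_mul (Real.rpow_nonneg (hu₁0 _) _)]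
    rw [hlin]
    exact ENNReal.ofReal_le_ofReal (hyp _ _)
  have key := my_pl_pi hlam₀ hlam₁ n f g h hf hg hh hyp'
  have hIf : ∫⁻ x, ENNReal.ofReal (u₁ x) = ∫⁻ x, f x := by
    rw [← P.lintegral_comp hf]
    refine lintegral_congr fun x => ?_
    rw [hfdef]
    simp only [← he, MeasurableEquiv.symm_apply_apply]
  have hIg : ∫⁻ y, ENNReal.ofReal (u₂ y) = ∫⁻ y, g y := by
    rw [← P.lintegral_comp hg]
    refine lintegral_congr fun x => ?_
    rw [hgdef]
    simp only [← he, MeasurableEquiv.symm_apply_apply]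
  have hIh : ∫⁻ z, ENNReal.ofReal (v z) = ∫⁻ z, h z := by
    rw [← P.lintegral_comp hh]
    refine lintegral_congr fun x => ?_
    rw [hhdef]
    simp only [← he, MeasurableEquiv.symm_apply_apply]
  rw [hIf, hIg, hIh]
  exact key
end

section
/- Let A : [τ₁, τ₂] → Mat(n, ℝ) be smooth with A(t) invertible for all t, satisfying A''(t) + (1/(2t))·A'(t) = M(t)·A(t) where each M(t) is symmetric, and suppose A'(τ₁)·A(τ₁)^(-1) is symmetric. Then A'(t)·A(t)^(-1) is symmetric for all t ∈ [τ₁, τ₂]. -/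
open Set Matrix

lemma symm_iff_wronskian {n : ℕ} {A A' : Matrix (Fin n) (Fin n) ℝ}
    (h : IsUnit A.det) :
    (A' * A⁻¹).IsSymm ↔ Aᵀ * A' = A'ᵀ * A := by
  have hAT : IsUnit Aᵀ.det := by rwa [Matrix.det_transpose]
  constructor
  · intro hs
    have hs' : (A⁻¹)ᵀ * A'ᵀ = A' * A⁻¹ := by
      have := hs.eq
      rwa [Matrix.transpose_mul] at this
    calc Aᵀ * A' = Aᵀ * (A' * A⁻¹ * A) := by
          rw [mul_assoc, Matrix.nonsing_inv_mul _ h, mul_one]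
      _ = Aᵀ * ((A⁻¹)ᵀ * A'ᵀ * A) := by rw [hs']
      _ = (Aᵀ * (Aᵀ)⁻¹) * (A'ᵀ * A) := by
          rw [Matrix.transpose_nonsing_inv]; rw [mul_assoc, mul_assoc]
      _ = A'ᵀ * A := by rw [Matrix.mul_nonsing_inv _ hAT, one_mul]
  · intro he
    unfold Matrix.IsSymm
    calc (A' * A⁻¹)ᵀ = (A⁻¹)ᵀ * A'ᵀ := by rw [Matrix.transpose_mul]
      _ = (Aᵀ)⁻¹ * A'ᵀ * (A * A⁻¹) := by
          rw [Matrix.transpose_nonsing_inv, Matrix.mul_nonsing_inv _ h, mul_one]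
      _ = (Aᵀ)⁻¹ * (A'ᵀ * A) * A⁻¹ := by rw [mul_assoc, mul_assoc, mul_assoc]
      _ = ((Aᵀ)⁻¹ * Aᵀ) * A' * A⁻¹ := by rw [← he]; noncomm_ring
      _ = A' * A⁻¹ := by rw [Matrix.nonsing_inv_mul _ hAT, one_mul]

lemma wronskian_deriv_eq {n : ℕ} {A A' A'' M : Matrix (Fin n) (Fin n) ℝ} {t : ℝ}
    (hODE : A'' + (1 / (2 * t)) • A' = M * A) (hM : M.IsSymm) :
    Aᵀ * A'' - A''ᵀ * A = (-(1 / (2 * t))) • (Aᵀ * A' - A'ᵀ * A) := by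
  have h : A'' = M * A - (1 / (2 * t)) • A' := by
    rw [← hODE]; abel
  rw [h]
  simp only [Matrix.transpose_sub, Matrix.transpose_mul, Matrix.transpose_smul,
    Matrix.mul_sub, Matrix.sub_mul, Matrix.mul_smul, Matrix.smul_mul, hM.eq,
    ← Matrix.mul_assoc]
  module

/-- Propagation of symmetry: if a smooth family of invertible matrices `A(t)` solves
`A''(t) + (1/(2t)) A'(t) = M(t) A(t)` with each `M(t)` symmetric, and if
`A'(τ₁) A(τ₁)⁻¹` is symmetric, then `A'(t) A(t)⁻¹` is symmetric for all
`t ∈ [τ₁, τ₂]`. -/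
theorem symm_propagation
    {n : ℕ} {τ₁ τ₂ : ℝ} (h₁ : 0 < τ₁) (h₂ : τ₁ < τ₂)
    {A A' A'' M : ℝ → Matrix (Fin n) (Fin n) ℝ}
    (hA : ∀ t ∈ Icc τ₁ τ₂, ∀ i j,
      HasDerivWithinAt (fun s => A s i j) (A' t i j) (Icc τ₁ τ₂) t)
    (hA' : ∀ t ∈ Icc τ₁ τ₂, ∀ i j,
      HasDerivWithinAt (fun s => A' s i j) (A'' t i j) (Icc τ₁ τ₂) t)
    (hA''cont : ∀ i j, ContinuousOn (fun s => A'' s i j) (Icc τ₁ τ₂))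
    (hinv : ∀ t ∈ Icc τ₁ τ₂, IsUnit (A t).det)
    (hODE : ∀ t ∈ Icc τ₁ τ₂, A'' t + (1 / (2 * t)) • A' t = M t * A t)
    (hMsymm : ∀ t ∈ Icc τ₁ τ₂, (M t).IsSymm)
    (hinit : (A' τ₁ * (A τ₁)⁻¹).IsSymm) :
    ∀ t ∈ Icc τ₁ τ₂, (A' t * (A t)⁻¹).IsSymm := by
  -- the "Wronskian" B(t) = Aᵀ A' - A'ᵀ A
  set B : ℝ → Matrix (Fin n) (Fin n) ℝ :=
    fun s => (A s)ᵀ * A' s - (A' s)ᵀ * A s with hBdef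
  -- entrywise derivative of B
  have hBderiv : ∀ s ∈ Icc τ₁ τ₂, ∀ i j,
      HasDerivWithinAt (fun u => B u i j) ((-(1 / (2 * s))) * B s i j)
        (Icc τ₁ τ₂) s := by
    intro s hs i j
    have hd : HasDerivWithinAt (fun u => B u i j)
        (((A s)ᵀ * A'' s - (A'' s)ᵀ * A s) i j) (Icc τ₁ τ₂) s := by
      have : ∀ u, B u i j =
          ∑ k, (A u k i * A' u k j - A' u k i * A u k j) := by
        intro u
        simp [hBdef, Matrix.sub_apply, Matrix.mul_apply, Matrix.transpose_apply,
          Finset.sum_sub_distrib]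
      simp only [this]
      have he : ((A s)ᵀ * A'' s - (A'' s)ᵀ * A s) i j =
          ∑ k, ((A' s k i * A' s k j + A s k i * A'' s k j)
            - (A'' s k i * A s k j + A' s k i * A' s k j)) := by
        simp [Matrix.sub_apply, Matrix.mul_apply, Matrix.transpose_apply,
          Finset.sum_add_distrib, Finset.sum_sub_distrib]
        ring
      rw [he]
      apply HasDerivWithinAt.fun_sum
      intro k _
      exact ((hA s hs k i).mul (hA' s hs k j)).sub
        ((hA' s hs k i).mul (hA s hs k j))
    have heq : ((A s)ᵀ * A'' s - (A'' s)ᵀ * A s) i j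
        = (-(1 / (2 * s))) * B s i j := by
      rw [wronskian_deriv_eq (hODE s hs) (hMsymm s hs)]
      simp [Matrix.smul_apply, hBdef]
    rwa [heq] at hd
  -- B(τ₁) = 0
  have hB0 : B τ₁ = 0 := by
    have := (symm_iff_wronskian (hinv τ₁ ⟨le_refl _, le_of_lt h₂⟩)).mp hinit
    simp [hBdef, this]
  -- f(u) = √u * B u i j has zero derivative on the interval
  intro t ht
  have hBt : B t = 0 := by
    ext i j
    have hf : ∀ s ∈ Icc τ₁ τ₂,
        HasDerivWithinAt (fun u => Real.sqrt u * B u i j) 0 (Icc τ₁ τ₂) s := by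
      intro s hs
      have hspos : 0 < s := lt_of_lt_of_le h₁ hs.1
      have hsq : HasDerivWithinAt Real.sqrt (1 / (2 * Real.sqrt s))
          (Icc τ₁ τ₂) s :=
        (Real.hasDerivAt_sqrt (ne_of_gt hspos)).hasDerivWithinAt
      have := hsq.mul (hBderiv s hs i j)
      have hval : 1 / (2 * Real.sqrt s) * B s i j
          + Real.sqrt s * (-(1 / (2 * s)) * B s i j) = 0 := by
        have hsqs : Real.sqrt s * Real.sqrt s = s :=
          Real.mul_self_sqrt (le_of_lt hspos)
        have hsne : Real.sqrt s ≠ 0 :=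
          ne_of_gt (Real.sqrt_pos.mpr hspos)
        field_simp
        linear_combination (-B s i j) * hsqs
      rwa [hval] at this
    have hdiff : DifferentiableOn ℝ (fun u => Real.sqrt u * B u i j)
        (Icc τ₁ τ₂) := fun s hs => ((hf s hs).differentiableWithinAt)
    have hzero : ∀ s ∈ Ico τ₁ τ₂,
        derivWithin (fun u => Real.sqrt u * B u i j) (Icc τ₁ τ₂) s = 0 := by
      intro s hs
      exact (hf s ⟨hs.1, le_of_lt hs.2⟩).derivWithin
        (uniqueDiffOn_Icc h₂ s ⟨hs.1, le_of_lt hs.2⟩)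
    have hconst := constant_of_derivWithin_zero hdiff hzero t ht
    have : Real.sqrt t * B t i j = 0 := by
      rw [hconst, hB0]; simp
    have htne : Real.sqrt t ≠ 0 :=
      ne_of_gt (Real.sqrt_pos.mpr (lt_of_lt_of_le h₁ ht.1))
    have := mul_eq_zero.mp this
    simp [Matrix.zero_apply]
    tauto
  -- conclude symmetry
  refine (symm_iff_wronskian (hinv t ht)).mpr ?_
  have : (A t)ᵀ * A' t - (A' t)ᵀ * A t = 0 := hBt
  linear_combination (norm := module) this
end

section
/- Let A : [τ₁, τ₂] → GL(n, ℝ) be smooth with A'(t)A(t)^(-1) symmetric, satisfying A''(t) + (1/(2t))A'(t) = M(t)A(t) with M(t) symmetric, and let f(t) = log det A(t). Then t^(-3/2) · d/dt[t^(3/2)·f'(t)] ≤ tr(M(t)) + n/(4t²) for all t ∈ [τ₁, τ₂]. -/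
open Set Matrix

lemma trace_adjugate_mul_eq {n : ℕ} (C B : Matrix (Fin n) (Fin n) ℝ) :
    trace (adjugate C * B) =
      ∑ σ : Equiv.Perm (Fin n), ((Equiv.Perm.sign σ : ℤ) : ℝ) *
        ∑ i, (∏ k ∈ Finset.univ.erase i, C (σ k) k) • B (σ i) i := by
  have h1 : ∀ i : Fin n, (adjugate C * B) i i
      = (updateCol C i fun j => B j i).det := by
    intro i
    rw [← cramer_apply, cramer_eq_adjugate_mulVec]
    simp [Matrix.mul_apply, Matrix.mulVec, dotProduct]
  have h2 : trace (adjugate C * B)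
      = ∑ i, ∑ σ : Equiv.Perm (Fin n), ((Equiv.Perm.sign σ : ℤ) : ℝ) *
          (B (σ i) i * ∏ k ∈ Finset.univ.erase i, C (σ k) k) := by
    rw [Matrix.trace]
    refine Finset.sum_congr rfl fun i _ => ?_
    rw [Matrix.diag_apply, h1, Matrix.det_apply']
    refine Finset.sum_congr rfl fun σ _ => ?_
    congr 1
    rw [← Finset.mul_prod_erase Finset.univ _ (Finset.mem_univ i)]
    rw [Matrix.updateCol_apply, if_pos rfl]
    congr 1
    refine Finset.prod_congr rfl fun k hk => ?_
    rw [Matrix.updateCol_apply, if_neg (Finset.ne_of_mem_erase hk)]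
  rw [h2, Finset.sum_comm]
  refine Finset.sum_congr rfl fun σ _ => ?_
  rw [Finset.mul_sum]
  refine Finset.sum_congr rfl fun i _ => ?_
  simp only [smul_eq_mul]
  ring

lemma hasDerivWithinAt_det' {n : ℕ} {s : Set ℝ} {A : ℝ → Matrix (Fin n) (Fin n) ℝ}
    {B : Matrix (Fin n) (Fin n) ℝ} {t : ℝ}
    (hA : ∀ i j, HasDerivWithinAt (fun u => A u i j) (B i j) s t) :
    HasDerivWithinAt (fun u => (A u).det) (trace (adjugate (A t) * B)) s t := by
  have h : HasDerivWithinAt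
      (fun u => ∑ σ : Equiv.Perm (Fin n), ((Equiv.Perm.sign σ : ℤ) : ℝ) *
        ∏ i, A u (σ i) i)
      (∑ σ : Equiv.Perm (Fin n), ((Equiv.Perm.sign σ : ℤ) : ℝ) *
        ∑ i, (∏ k ∈ Finset.univ.erase i, A t (σ k) k) • B (σ i) i) s t :=
    HasDerivWithinAt.fun_sum fun σ _ =>
      (HasDerivWithinAt.fun_finsetProd fun i _ => hA (σ i) i).const_mul _
  rw [trace_adjugate_mul_eq]
  simpa only [Matrix.det_apply'] using h

lemma diffWithinAt_inv_entry {n : ℕ} {s : Set ℝ} {A : ℝ → Matrix (Fin n) (Fin n) ℝ}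
    {B : Matrix (Fin n) (Fin n) ℝ} {t : ℝ}
    (hA : ∀ i j, HasDerivWithinAt (fun u => A u i j) (B i j) s t)
    (hdet : (A t).det ≠ 0) (i j : Fin n) :
    DifferentiableWithinAt ℝ (fun u => (A u)⁻¹ i j) s t := by
  have hadj : DifferentiableWithinAt ℝ (fun u => adjugate (A u) i j) s t := by
    have h : HasDerivWithinAt (fun u => ((A u).updateRow j (Pi.single i 1)).det)
        (trace (adjugate ((A t).updateRow j (Pi.single i 1)) * (B.updateRow j 0))) s t := by
      apply hasDerivWithinAt_det'
      intro a b
      simp only [Matrix.updateRow_apply]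
      rcases eq_or_ne a j with rfl | hne
      · simp only [if_pos rfl, Pi.zero_apply]
        exact hasDerivWithinAt_const t s _
      · simp only [if_neg hne]
        exact hA a b
    simp only [← Matrix.adjugate_apply] at h
    exact h.differentiableWithinAt
  have hd : DifferentiableWithinAt ℝ (fun u => (A u).det) s t :=
    (hasDerivWithinAt_det' hA).differentiableWithinAt
  have hmul : DifferentiableWithinAt ℝ (fun u => ((A u).det)⁻¹ * adjugate (A u) i j) s t :=
    (hd.inv hdet).mul hadj
  refine hmul.congr (fun u _ => ?_) ?_ <;>
    rw [Matrix.inv_def, Matrix.smul_apply, Ring.inverse_eq_inv', smul_eq_mul]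


/-- If `A(t)` is a smooth family of invertible matrices with `A'(t) A(t)⁻¹` symmetric
solving `A''(t) + (1/(2t)) A'(t) = M(t) A(t)` with `M(t)` symmetric, and
`f(t) = log det A(t)`, then `f''(t) + (3/(2t)) f'(t) ≤ tr(M(t)) + n/(4t²)`
on `[τ₁, τ₂]`. -/
theorem logDet_differential_inequality
    {n : ℕ} {τ₁ τ₂ : ℝ} (h₁ : 0 < τ₁) (h₂ : τ₁ < τ₂)
    {A A' A'' M : ℝ → Matrix (Fin n) (Fin n) ℝ}
    (hA : ∀ t ∈ Icc τ₁ τ₂, ∀ i j,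
      HasDerivWithinAt (fun s => A s i j) (A' t i j) (Icc τ₁ τ₂) t)
    (hA' : ∀ t ∈ Icc τ₁ τ₂, ∀ i j,
      HasDerivWithinAt (fun s => A' s i j) (A'' t i j) (Icc τ₁ τ₂) t)
    (hinv : ∀ t ∈ Icc τ₁ τ₂, IsUnit (A t).det)
    (hsymm : ∀ t ∈ Icc τ₁ τ₂, (A' t * (A t)⁻¹).IsSymm)
    (hODE : ∀ t ∈ Icc τ₁ τ₂, A'' t + (1 / (2 * t)) • A' t = M t * A t)
    (hMsymm : ∀ t ∈ Icc τ₁ τ₂, (M t).IsSymm)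
    {f' f'' : ℝ → ℝ}
    (hf : ∀ t ∈ Icc τ₁ τ₂,
      HasDerivWithinAt (fun s => Real.log (A s).det) (f' t) (Icc τ₁ τ₂) t)
    (hf' : ∀ t ∈ Icc τ₁ τ₂, HasDerivWithinAt f' (f'' t) (Icc τ₁ τ₂) t) :
    ∀ t ∈ Icc τ₁ τ₂, f'' t + 3 / (2 * t) * f' t ≤ trace (M t) + n / (4 * t ^ 2) := by
  intro t ht
  have huniq : UniqueDiffOn ℝ (Icc τ₁ τ₂) := uniqueDiffOn_Icc h₂
  have ht0 : 0 < t := lt_of_lt_of_le h₁ ht.1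
  have htne : t ≠ 0 := ne_of_gt ht0
  have hdne : ∀ u ∈ Icc τ₁ τ₂, (A u).det ≠ 0 := fun u hu => (hinv u hu).ne_zero
  -- derivative of log det
  have hlog : ∀ u ∈ Icc τ₁ τ₂, HasDerivWithinAt (fun s => Real.log (A s).det)
      (trace (A' u * (A u)⁻¹)) (Icc τ₁ τ₂) u := by
    intro u hu
    have hl := (hasDerivWithinAt_det' (fun i j => hA u hu i j)).log (hdne u hu)
    convert hl using 1
    rw [Matrix.trace_mul_comm, Matrix.inv_def, Ring.inverse_eq_inv',
        Matrix.smul_mul, Matrix.trace_smul, smul_eq_mul, div_eq_inv_mul]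
  have hf'eq : ∀ u ∈ Icc τ₁ τ₂, f' u = trace (A' u * (A u)⁻¹) := by
    intro u hu
    rw [← (hf u hu).derivWithin (huniq u hu), (hlog u hu).derivWithin (huniq u hu)]
  -- derivative of inverse entries
  set D : Matrix (Fin n) (Fin n) ℝ :=
    Matrix.of (fun i j => derivWithin (fun s => (A s)⁻¹ i j) (Icc τ₁ τ₂) t) with hDdef
  have hD0 : ∀ i j, HasDerivWithinAt (fun s => (A s)⁻¹ i j) (D i j) (Icc τ₁ τ₂) t :=
    fun i j => (diffWithinAt_inv_entry (fun i j => hA t ht i j) (hdne t ht) i j).hasDerivWithinAt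
  have hAD : A' t * (A t)⁻¹ + A t * D = 0 := by
    ext i j
    have hg : HasDerivWithinAt (fun s => ∑ k, A s i k * (A s)⁻¹ k j)
        (∑ k, (A' t i k * (A t)⁻¹ k j + A t i k * D k j)) (Icc τ₁ τ₂) t :=
      HasDerivWithinAt.fun_sum fun k _ => (hA t ht i k).fun_mul (hD0 k j)
    have hgconst : ∀ s ∈ Icc τ₁ τ₂,
        (∑ k, A s i k * (A s)⁻¹ k j) = (1 : Matrix (Fin n) (Fin n) ℝ) i j := by
      intro s hs
      rw [← Matrix.mul_apply, Matrix.mul_nonsing_inv _ (hinv s hs)]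
    have h0 : HasDerivWithinAt (fun s => ∑ k, A s i k * (A s)⁻¹ k j) 0 (Icc τ₁ τ₂) t :=
      (hasDerivWithinAt_const t _ _).congr hgconst (hgconst t ht)
    have hu := hg.derivWithin (huniq t ht)
    rw [h0.derivWithin (huniq t ht)] at hu
    simp only [Matrix.add_apply, Matrix.mul_apply, Matrix.zero_apply, ← Finset.sum_add_distrib]
    exact hu.symm
  have hDeq : D = -((A t)⁻¹ * A' t * (A t)⁻¹) := by
    have h1 : A t * D = -(A' t * (A t)⁻¹) := by
      rw [add_comm] at hAD; exact eq_neg_of_add_eq_zero_left hAD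
    calc D = ((A t)⁻¹ * A t) * D := by rw [Matrix.nonsing_inv_mul _ (hinv t ht), Matrix.one_mul]
    _ = (A t)⁻¹ * (A t * D) := by rw [Matrix.mul_assoc]
    _ = (A t)⁻¹ * -(A' t * (A t)⁻¹) := by rw [h1]
    _ = -((A t)⁻¹ * A' t * (A t)⁻¹) := by rw [Matrix.mul_neg, Matrix.mul_assoc]
  -- second derivative of log det
  have hG : HasDerivWithinAt (fun s => ∑ i, ∑ k, A' s i k * (A s)⁻¹ k i)
      (∑ i, ∑ k, (A'' t i k * (A t)⁻¹ k i + A' t i k * D k i)) (Icc τ₁ τ₂) t :=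
    HasDerivWithinAt.fun_sum fun i _ => HasDerivWithinAt.fun_sum fun k _ =>
      (hA' t ht i k).fun_mul (hD0 k i)
  have hGf' : HasDerivWithinAt f'
      (∑ i, ∑ k, (A'' t i k * (A t)⁻¹ k i + A' t i k * D k i)) (Icc τ₁ τ₂) t := by
    refine hG.congr (fun u hu => ?_) ?_
    · rw [hf'eq u hu]; simp [Matrix.trace, Matrix.mul_apply]
    · rw [hf'eq t ht]; simp [Matrix.trace, Matrix.mul_apply]
  have hf''eq : f'' t = trace (A'' t * (A t)⁻¹) + trace (A' t * D) := by
    rw [← (hf' t ht).derivWithin (huniq t ht), hGf'.derivWithin (huniq t ht)]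
    simp [Matrix.trace, Matrix.mul_apply, Finset.sum_add_distrib]
  have htrD : trace (A' t * D) = - trace ((A' t * (A t)⁻¹) * (A' t * (A t)⁻¹)) := by
    rw [hDeq, Matrix.mul_neg, Matrix.trace_neg]
    congr 1
    simp only [Matrix.mul_assoc]
  have htrA'' : trace (A'' t * (A t)⁻¹) = trace (M t) - 1/(2*t) * f' t := by
    have hA''eq : A'' t = M t * A t - (1 / (2 * t)) • A' t := eq_sub_of_add_eq (hODE t ht)
    rw [hA''eq, Matrix.sub_mul, Matrix.trace_sub, Matrix.mul_assoc,
        Matrix.mul_nonsing_inv _ (hinv t ht), Matrix.mul_one,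
        Matrix.smul_mul, Matrix.trace_smul, smul_eq_mul, hf'eq t ht]
  -- the inequality
  have hBsymm : ∀ i k, (A' t * (A t)⁻¹) k i = (A' t * (A t)⁻¹) i k :=
    fun i k => (hsymm t ht).apply i k
  have htrBB : ∀ P : Matrix (Fin n) (Fin n) ℝ, (∀ i k, P k i = P i k) →
      trace (P * P) = ∑ i, ∑ k, (P i k)^2 := by
    intro P hP
    simp only [Matrix.trace, Matrix.diag_apply, Matrix.mul_apply]
    exact Finset.sum_congr rfl fun i _ => Finset.sum_congr rfl fun k _ => by
      rw [hP i k]; ring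
  have hkey : ∀ P : Matrix (Fin n) (Fin n) ℝ, (∀ i k, P k i = P i k) →
      (1/t) * trace P - trace (P * P) ≤ n / (4 * t^2) := by
    intro P hP
    have hdiag : ∑ i, (P i i)^2 ≤ ∑ i, ∑ k, (P i k)^2 :=
      Finset.sum_le_sum fun i _ => Finset.single_le_sum (f := fun k => (P i k)^2)
        (fun k _ => sq_nonneg _) (Finset.mem_univ i)
    have hpt : ∀ x : ℝ, (1/t) * x - x^2 ≤ 1/(4*t^2) := by
      intro x
      have hexp : (x - 1/(2*t))^2 = x^2 - (1/t)*x + 1/(4*t^2) := by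
        field_simp
        ring
      nlinarith [sq_nonneg (x - 1/(2*t))]
    have hsum : ∑ i, ((1/t) * P i i - (P i i)^2) ≤ ∑ _i : Fin n, (1/(4*t^2) : ℝ) :=
      Finset.sum_le_sum fun i _ => hpt _
    have hcard : ∑ _i : Fin n, (1/(4*t^2) : ℝ) = n / (4*t^2) := by
      simp [Finset.sum_const, Finset.card_univ, mul_one_div]
      ring
    have htr : trace P = ∑ i, P i i := rfl
    calc (1/t) * trace P - trace (P*P)
        ≤ (1/t) * (∑ i, P i i) - ∑ i, (P i i)^2 := by
          rw [htrBB P hP, htr]; linarith [hdiag]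
      _ = ∑ i, ((1/t) * P i i - (P i i)^2) := by
          rw [Finset.mul_sum, Finset.sum_sub_distrib]
      _ ≤ n / (4*t^2) := hcard ▸ hsum
  have hfin := hkey (A' t * (A t)⁻¹) hBsymm
  have harith : f'' t + 3 / (2 * t) * f' t
      = trace (M t) + ((1/t) * trace (A' t * (A t)⁻¹)
          - trace ((A' t * (A t)⁻¹) * (A' t * (A t)⁻¹))) := by
    rw [hf''eq, htrD, htrA'', hf'eq t ht]
    field_simp
    ring
  rw [harith]
  linarith [hfin]
end

section
/- Let ψ : [τ₁, τ₂] → ℝ be C² with t^(-3/2)·d/dt[t^(3/2)·ψ'(t)] ≥ 0 on [τ₁, τ₂] ⊂ (0,∞). Then for any τ ∈ (τ₁, τ₂), writing 1/√τ = (1-λ)/√τ₁ + λ/√τ₂ with λ ∈ (0,1), one has exp(-ψ(τ)) ≥ exp(-ψ(τ₁))^(1-λ) · exp(-ψ(τ₂))^λ. -/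
open Set

/-- If `ψ` is `C²` on `[τ₁, τ₂] ⊂ (0,∞)` with `ψ''(t) + (3/(2t)) ψ'(t) ≥ 0`, then for
`τ ∈ (τ₁, τ₂)` and `λ ∈ (0,1)` with `1/√τ = (1-λ)/√τ₁ + λ/√τ₂`, one has
`exp(-ψ(τ)) ≥ exp(-ψ(τ₁))^(1-λ) · exp(-ψ(τ₂))^λ`. -/
theorem exp_neg_psi_interpolation
    {τ₁ τ τ₂ lam : ℝ} (h₁ : 0 < τ₁) (h₂ : τ₁ < τ) (h₃ : τ < τ₂)
    {ψ ψ' ψ'' : ℝ → ℝ}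
    (hψ : ∀ t ∈ Icc τ₁ τ₂, HasDerivWithinAt ψ (ψ' t) (Icc τ₁ τ₂) t)
    (hψ' : ∀ t ∈ Icc τ₁ τ₂, HasDerivWithinAt ψ' (ψ'' t) (Icc τ₁ τ₂) t)
    (hψineq : ∀ t ∈ Icc τ₁ τ₂, 0 ≤ ψ'' t + 3 / (2 * t) * ψ' t)
    (hlam : lam ∈ Ioo (0 : ℝ) 1)
    (hrel : 1 / Real.sqrt τ = (1 - lam) / Real.sqrt τ₁ + lam / Real.sqrt τ₂) :
    Real.exp (-ψ τ₁) ^ (1 - lam) * Real.exp (-ψ τ₂) ^ lam ≤ Real.exp (-ψ τ) := by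
  have hτ : 0 < τ := h₁.trans h₂
  have hτ₂ : 0 < τ₂ := hτ.trans h₃
  set a : ℝ := (Real.sqrt τ₂)⁻¹ with ha_def
  set b : ℝ := (Real.sqrt τ₁)⁻¹ with hb_def
  have hs1 : 0 < Real.sqrt τ₁ := Real.sqrt_pos.mpr h₁
  have hs2 : 0 < Real.sqrt τ₂ := Real.sqrt_pos.mpr hτ₂
  have ha : 0 < a := inv_pos.mpr hs2
  have hb : 0 < b := inv_pos.mpr hs1
  have hab : a < b := by
    apply inv_strictAnti₀ hs1
    exact Real.sqrt_lt_sqrt h₁.le (h₂.trans h₃)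
  have ha2 : (a ^ 2)⁻¹ = τ₂ := by
    rw [ha_def, inv_pow, inv_inv, Real.sq_sqrt hτ₂.le]
  have hb2 : (b ^ 2)⁻¹ = τ₁ := by
    rw [hb_def, inv_pow, inv_inv, Real.sq_sqrt h₁.le]
  -- membership
  have hmem : ∀ s ∈ Icc a b, (s ^ 2)⁻¹ ∈ Icc τ₁ τ₂ := by
    intro s hs
    have hs0 : 0 < s := ha.trans_le hs.1
    constructor
    · rw [← hb2]
      exact inv_anti₀ (by positivity) (by nlinarith [hs.2])
    · rw [← ha2]
      exact inv_anti₀ (by positivity) (by nlinarith [hs.1])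
  -- derivative of m : s ↦ (s²)⁻¹
  have hm : ∀ s : ℝ, s ≠ 0 →
      HasDerivAt (fun s : ℝ => (s ^ 2)⁻¹) (-(2 * s) / (s ^ 2) ^ 2) s := by
    intro s hs
    have : HasDerivAt (fun s : ℝ => (s ^ 2)⁻¹) _ s := (hasDerivAt_pow 2 s).inv (pow_ne_zero 2 hs)
    convert this using 1
    push_cast
    ring
  -- second derivative of m
  have hm' : ∀ s : ℝ, s ≠ 0 →
      HasDerivAt (fun s : ℝ => -(2 * s) / (s ^ 2) ^ 2) (6 / s ^ 4) s := by
    intro s hs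
    have heq : (fun s : ℝ => -(2 * s) / (s ^ 2) ^ 2) = fun s : ℝ => -2 * (s ^ 3)⁻¹ := by
      funext x
      rcases eq_or_ne x 0 with h | h
      · simp [h]
      · field_simp
    rw [heq]
    have : HasDerivAt (fun s : ℝ => -2 * (s ^ 3)⁻¹) _ s := ((hasDerivAt_pow 3 s).inv (pow_ne_zero 3 hs)).const_mul (-2 : ℝ)
    convert this using 1
    push_cast
    field_simp
    ring
  set g : ℝ → ℝ := fun s => ψ ((s ^ 2)⁻¹) with hg_def
  set G' : ℝ → ℝ := fun s => ψ' ((s ^ 2)⁻¹) * (-(2 * s) / (s ^ 2) ^ 2) with hG'_def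
  have hne : ∀ s ∈ Icc a b, s ≠ 0 := fun s hs => (ha.trans_le hs.1).ne'
  have hg : ∀ s ∈ Icc a b, HasDerivWithinAt g (G' s) (Icc a b) s := by
    intro s hs
    exact HasDerivWithinAt.comp s (hψ _ (hmem s hs)) ((hm s (hne s hs)).hasDerivWithinAt) hmem
  have hG' : ∀ s ∈ Icc a b, HasDerivWithinAt G'
      (ψ'' ((s ^ 2)⁻¹) * (-(2 * s) / (s ^ 2) ^ 2) * (-(2 * s) / (s ^ 2) ^ 2)
        + ψ' ((s ^ 2)⁻¹) * (6 / s ^ 4)) (Icc a b) s := by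
    intro s hs
    exact (HasDerivWithinAt.comp s (hψ' _ (hmem s hs))
      ((hm s (hne s hs)).hasDerivWithinAt) hmem).mul ((hm' s (hne s hs)).hasDerivWithinAt)
  -- convexity
  have hconv : ConvexOn ℝ (Icc a b) g := by
    apply convexOn_of_hasDerivWithinAt2_nonneg (convex_Icc a b)
      (fun s hs => (hg s hs).continuousWithinAt)
      (f' := G')
      (f'' := fun s => ψ'' ((s ^ 2)⁻¹) * (-(2 * s) / (s ^ 2) ^ 2) * (-(2 * s) / (s ^ 2) ^ 2)
        + ψ' ((s ^ 2)⁻¹) * (6 / s ^ 4))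
    · rw [interior_Icc]
      intro x hx
      exact (hg x (Ioo_subset_Icc_self hx)).mono Ioo_subset_Icc_self
    · rw [interior_Icc]
      intro x hx
      exact (hG' x (Ioo_subset_Icc_self hx)).mono Ioo_subset_Icc_self
    · intro x hx
      rw [interior_Icc] at hx
      have hx' := Ioo_subset_Icc_self hx
      have hx0 : 0 < x := ha.trans_le hx'.1
      have ht := hmem x hx'
      have ht0 : 0 < (x ^ 2)⁻¹ := h₁.trans_le ht.1
      have hkey := hψineq _ ht
      have heq : ψ'' ((x ^ 2)⁻¹) * (-(2 * x) / (x ^ 2) ^ 2) * (-(2 * x) / (x ^ 2) ^ 2)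
          + ψ' ((x ^ 2)⁻¹) * (6 / x ^ 4)
          = (4 / x ^ 6) * (ψ'' ((x ^ 2)⁻¹) + 3 / (2 * (x ^ 2)⁻¹) * ψ' ((x ^ 2)⁻¹)) := by
        field_simp
        ring
      rw [heq]
      exact mul_nonneg (by positivity) hkey
  obtain ⟨hl0, hl1⟩ := hlam
  -- apply convexity at the combination
  have hcomb : (1 - lam) • b + lam • a = (Real.sqrt τ)⁻¹ := by
    simp only [smul_eq_mul]
    rw [eq_comm, ← one_div]
    rw [hrel]
    rw [div_eq_mul_inv, div_eq_mul_inv]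
  have hkey := hconv.2 (⟨hab.le, le_refl b⟩ : b ∈ Icc a b) (⟨le_refl a, hab.le⟩ : a ∈ Icc a b)
    (by linarith : (0:ℝ) ≤ 1 - lam) hl0.le (by ring)
  rw [hcomb] at hkey
  have hgτ : g ((Real.sqrt τ)⁻¹) = ψ τ := by
    simp only [hg_def]
    rw [inv_pow, inv_inv, Real.sq_sqrt hτ.le]
  have hgb : g b = ψ τ₁ := by simp only [hg_def]; rw [hb2]
  have hga : g a = ψ τ₂ := by simp only [hg_def]; rw [ha2]
  rw [hgτ, hgb, hga] at hkey
  simp only [smul_eq_mul] at hkey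
  -- conclude
  rw [← Real.exp_mul, ← Real.exp_mul, ← Real.exp_add, Real.exp_le_exp]
  nlinarith
end
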